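/- arXiv:2407.13732 — 2 statements merged into one kernel-verified Lean document; each statement's English description precedes it below -/
import Mathlib

section
/- Excess error bound over all measurable functions for Ψ(t) = 1 − t and arbitrary cost (Corollary 4.5): let H_all be the set of all hypotheses (all functions X×Ȳ → ℝ measurable in x), let c : X×[n] → [0,1] be any measurable cost, and suppose Ψ(t) = 1 − t. Then for every h ∈ H_all, E_{L_def}(h) − E*_{L_def}(H_all) ≤ (n+1)·( E_{L_Ψ}(h) − E*_{L_Ψ}(H_all) ). -/
open MeasureTheory

/-- Softmax of a score vector. -/
noncomputable def smax {m : ℕ} (v : Fin m → ℝ) (y : Fin m) : ℝ :=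
  Real.exp (v y) / ∑ y' : Fin m, Real.exp (v y')

/-- Deferral loss `L_def(h,x,y) = 1_{𝗁(x)≠y}·1_{𝗁(x)∈[n]} + c(x,y)·1_{𝗁(x)=n+1}`,
where the prediction `𝗁(x) = pred (h x)` and `Fin.last n` is the deferral label. -/
noncomputable def defLoss {X : Type*} {n : ℕ} (pred : (Fin (n + 1) → ℝ) → Fin (n + 1))
    (c : X → Fin n → ℝ) (h : X → Fin (n + 1) → ℝ) (x : X) (y : Fin n) : ℝ :=
  (if pred (h x) ≠ y.castSucc ∧ pred (h x) ≠ Fin.last n then 1 else 0)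
    + c x y * (if pred (h x) = Fin.last n then 1 else 0)

/-- RL2D surrogate loss
`L_Ψ(h,x,y) = c(x,y)·Ψ(s_y(x;h)) + (1 − c(x,y))·Ψ(s_y(x;h) + s_{n+1}(x;h))`. -/
noncomputable def surLoss {X : Type*} {n : ℕ} (Ψ : ℝ → ℝ) (c : X → Fin n → ℝ)
    (h : X → Fin (n + 1) → ℝ) (x : X) (y : Fin n) : ℝ :=
  c x y * Ψ (smax (h x) y.castSucc)
    + (1 - c x y) * Ψ (smax (h x) y.castSucc + smax (h x) (Fin.last n))

/-- Conditional error `C_L(h,x) = Σ_{y∈[n]} p(x,y)·L(h,x,y)`. -/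
noncomputable def condErr {X : Type*} {n : ℕ} (p : X → Fin n → ℝ)
    (L : (X → Fin (n + 1) → ℝ) → X → Fin n → ℝ) (h : X → Fin (n + 1) → ℝ) (x : X) : ℝ :=
  ∑ y : Fin n, p x y * L h x y

/-- Generalization error `E_L(h) = ∫ Σ_{y∈[n]} p(x,y)·L(h,x,y) dμ(x)`. -/
noncomputable def genErr {X : Type*} [MeasurableSpace X] {n : ℕ} (μ : Measure X)
    (p : X → Fin n → ℝ) (L : (X → Fin (n + 1) → ℝ) → X → Fin n → ℝ)
    (h : X → Fin (n + 1) → ℝ) : ℝ :=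
  ∫ x, condErr p L h x ∂μ

/-- Best-in-class generalization error `E*_L(H) = inf_{h∈H} E_L(h)`. -/
noncomputable def bestErr {X : Type*} [MeasurableSpace X] {n : ℕ} (μ : Measure X)
    (p : X → Fin n → ℝ) (L : (X → Fin (n + 1) → ℝ) → X → Fin n → ℝ)
    (H : Set (X → Fin (n + 1) → ℝ)) : ℝ :=
  sInf ((genErr μ p L) '' H)

/-- Minimizability gap `M_L(H) = E*_L(H) − ∫ inf_{h∈H} C_L(h,x) dμ(x)`. -/
noncomputable def minGap {X : Type*} [MeasurableSpace X] {n : ℕ} (μ : Measure X)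
    (p : X → Fin n → ℝ) (L : (X → Fin (n + 1) → ℝ) → X → Fin n → ℝ)
    (H : Set (X → Fin (n + 1) → ℝ)) : ℝ :=
  bestErr μ p L H - ∫ x, sInf ((fun h => condErr p L h x) '' H) ∂μ

/-- `H` is symmetric: there is a family `F` of functions `X → ℝ` such that for every
`x`, `{(h(x,1),…,h(x,n+1)) : h ∈ H} = {(f₁(x),…,f_{n+1}(x)) : f₁,…,f_{n+1} ∈ F}`. -/
def SymmetricHyp {X : Type*} {n : ℕ} (H : Set (X → Fin (n + 1) → ℝ)) : Prop :=
  ∃ F : Set (X → ℝ), ∀ x : X,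
    (fun h : X → Fin (n + 1) → ℝ => h x) '' H =
      {v : Fin (n + 1) → ℝ |
        ∃ f : Fin (n + 1) → X → ℝ, (∀ k, f k ∈ F) ∧ v = fun k => f k x}

/-- `H` is complete: for every `x` and `y`, `{h(x,y) : h ∈ H} = ℝ`. -/
def CompleteHyp {X : Type*} {n : ℕ} (H : Set (X → Fin (n + 1) → ℝ)) : Prop :=
  ∀ (x : X) (y : Fin (n + 1)),
    (fun h : X → Fin (n + 1) → ℝ => h x y) '' H = Set.univ

lemma smax_denom_pos {m : ℕ} [NeZero m] (v : Fin m → ℝ) :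
    0 < ∑ y' : Fin m, Real.exp (v y') :=
  Finset.sum_pos (fun _ _ => Real.exp_pos _) ⟨0, Finset.mem_univ _⟩

lemma smax_pos {m : ℕ} [NeZero m] (v : Fin m → ℝ) (y : Fin m) : 0 < smax v y :=
  div_pos (Real.exp_pos _) (smax_denom_pos v)

lemma sum_smax {m : ℕ} [NeZero m] (v : Fin m → ℝ) : ∑ y : Fin m, smax v y = 1 := by
  unfold smax
  rw [← Finset.sum_div, div_self (smax_denom_pos v).ne']

lemma smax_mono {m : ℕ} [NeZero m] (v : Fin m → ℝ) {i j : Fin m} (h : v i ≤ v j) :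
    smax v i ≤ smax v j :=
  by have := smax_denom_pos v; unfold smax; gcongr

lemma smax_le_one {m : ℕ} [NeZero m] (v : Fin m → ℝ) (y : Fin m) : smax v y ≤ 1 := by
  have := sum_smax v
  have h := Finset.single_le_sum (f := smax v) (fun i _ => (smax_pos v i).le) (Finset.mem_univ y)
  linarith

/-- Core pointwise inequality. -/
lemma core_ineq {m : ℕ} (q : Fin (m + 1) → ℝ) (hq0 : ∀ k, 0 ≤ q k)
    (js jp : Fin (m + 1)) (hmax : ∀ k, q k ≤ q js)
    (v : Fin (m + 1) → ℝ) (hjp : ∀ k, v k ≤ v jp) :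
    q js - q jp ≤ ((m : ℝ) + 1) * (q js - ∑ k, q k * smax v k) := by
  set s := smax v with hs
  have hsle : ∀ k, s k ≤ s jp := fun k => smax_mono v (hjp k)
  have hspos : ∀ k, 0 < s k := smax_pos v
  have hsum : ∑ k, s k = 1 := sum_smax v
  have hcard : (1 : ℝ) ≤ ((m : ℝ) + 1) * s jp := by
    have : ∑ k : Fin (m + 1), s k ≤ ∑ _k : Fin (m + 1), s jp :=
      Finset.sum_le_sum fun k _ => hsle k
    simpa [hsum, Finset.card_univ, mul_comm] using this
  -- split the sum at jp
  have hsplit : ∑ k, q k * s k ≤ q jp * s jp + q js * (1 - s jp) := by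
    have h1 : ∑ k ∈ Finset.univ.erase jp, q k * s k ≤
        ∑ k ∈ Finset.univ.erase jp, q js * s k := by
      refine Finset.sum_le_sum fun k _ => ?_
      exact mul_le_mul_of_nonneg_right (hmax k) (hspos k).le
    have h2 : ∑ k ∈ Finset.univ.erase jp, s k = 1 - s jp := by
      have := Finset.add_sum_erase Finset.univ s (Finset.mem_univ jp)
      linarith [hsum ▸ this]
    calc ∑ k, q k * s k
        = q jp * s jp + ∑ k ∈ Finset.univ.erase jp, q k * s k := by
          rw [← Finset.add_sum_erase Finset.univ (fun k => q k * s k) (Finset.mem_univ jp)]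
      _ ≤ q jp * s jp + q js * (1 - s jp) := by
          rw [← Finset.mul_sum] at h1; rw [h2] at h1; linarith
  have hdiff0 : 0 ≤ q js - q jp := sub_nonneg.2 (hmax jp)
  have key : s jp * (q js - q jp) ≤ q js - ∑ k, q k * s k := by nlinarith
  nlinarith [mul_le_mul_of_nonneg_right hcard hdiff0]
/-- Measurable argmax with minimal-index tie-breaking. -/
noncomputable def argmaxF {X : Type*} {m : ℕ} (q : X → Fin (m + 1) → ℝ) (x : X) :
    Fin (m + 1) :=
  (Finset.univ.filter fun k => ∀ i, q x i ≤ q x k).min' (by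
    obtain ⟨k, -, hk⟩ := Finset.exists_max_image Finset.univ (q x) ⟨0, Finset.mem_univ 0⟩
    exact ⟨k, Finset.mem_filter.2 ⟨Finset.mem_univ _, fun i => hk i (Finset.mem_univ i)⟩⟩)

lemma argmaxF_spec {X : Type*} {m : ℕ} (q : X → Fin (m + 1) → ℝ) (x : X) (i : Fin (m + 1)) :
    q x i ≤ q x (argmaxF q x) := by
  have := Finset.min'_mem (Finset.univ.filter fun k => ∀ i, q x i ≤ q x k)
    (by obtain ⟨k, -, hk⟩ := Finset.exists_max_image Finset.univ (q x) ⟨0, Finset.mem_univ 0⟩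
        exact ⟨k, Finset.mem_filter.2 ⟨Finset.mem_univ _, fun i => hk i (Finset.mem_univ i)⟩⟩)
  exact (Finset.mem_filter.1 this).2 i

lemma argmaxF_eq_iff {X : Type*} {m : ℕ} (q : X → Fin (m + 1) → ℝ) (x : X) (k : Fin (m + 1)) :
    argmaxF q x = k ↔
      (∀ i, q x i ≤ q x k) ∧ ∀ j : Fin (m + 1), (∀ i, q x i ≤ q x j) → k ≤ j := by
  constructor
  · rintro rfl
    refine ⟨argmaxF_spec q x, fun j hj => ?_⟩
    exact Finset.min'_le _ j (Finset.mem_filter.2 ⟨Finset.mem_univ _, hj⟩)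
  · rintro ⟨h1, h2⟩
    refine le_antisymm (Finset.min'_le _ k (Finset.mem_filter.2 ⟨Finset.mem_univ _, h1⟩)) ?_
    exact Finset.le_min' _ _ _ fun j hj => h2 j (Finset.mem_filter.1 hj).2

lemma measurable_argmaxF {X : Type*} [MeasurableSpace X] {m : ℕ} {q : X → Fin (m + 1) → ℝ}
    (hq : ∀ k, Measurable fun x => q x k) : Measurable (argmaxF q) := by
  apply measurable_to_countable'
  intro k
  have hA : ∀ j : Fin (m + 1), MeasurableSet {x : X | ∀ i, q x i ≤ q x j} := by
    intro j
    have : {x : X | ∀ i, q x i ≤ q x j} = ⋂ i, {x : X | q x i ≤ q x j} := by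
      ext x; simp [Set.mem_iInter]
    rw [this]
    exact MeasurableSet.iInter fun i => measurableSet_le (hq i) (hq j)
  have : argmaxF q ⁻¹' {k} = {x : X | ∀ i, q x i ≤ q x k} ∩
      ⋂ j : Fin (m + 1), {x : X | (∀ i, q x i ≤ q x j) → k ≤ j} := by
    ext x
    simp only [Set.mem_preimage, Set.mem_singleton_iff, Set.mem_inter_iff, Set.mem_iInter,
      Set.mem_setOf_eq, argmaxF_eq_iff]
  rw [this]
  refine (hA k).inter (MeasurableSet.iInter fun j => ?_)
  by_cases hkj : k ≤ j
  · have : {x : X | (∀ i, q x i ≤ q x j) → k ≤ j} = Set.univ := by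
      ext x; simp [hkj]
    rw [this]; exact MeasurableSet.univ
  · have : {x : X | (∀ i, q x i ≤ q x j) → k ≤ j} = {x : X | ∀ i, q x i ≤ q x j}ᶜ := by
      ext x; simp [hkj]
    rw [this]; exact (hA j).compl

section CondErr
variable {X : Type*} {n : ℕ}

/-- The extended conditional distribution `q`. -/
noncomputable def qext (p c : X → Fin n → ℝ) (x : X) : Fin (n + 1) → ℝ :=
  Fin.snoc (p x) (∑ y : Fin n, p x y * (1 - c x y))

lemma condErr_sur (p c : X → Fin n → ℝ) (hp1 : ∀ x, ∑ y : Fin n, p x y = 1)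
    (h : X → Fin (n + 1) → ℝ) (x : X) :
    condErr p (surLoss (fun t => 1 - t) c) h x
      = 1 - ∑ k : Fin (n + 1), qext p c x k * smax (h x) k := by
  unfold condErr surLoss
  rw [Fin.sum_univ_castSucc]
  simp only [qext, Fin.snoc_castSucc, Fin.snoc_last]
  have e1 : ∀ y : Fin n, p x y * (c x y * (1 - smax (h x) y.castSucc)
        + (1 - c x y) * (1 - (smax (h x) y.castSucc + smax (h x) (Fin.last n))))
      = (p x y - p x y * smax (h x) y.castSucc)
        - (p x y * (1 - c x y)) * smax (h x) (Fin.last n) := fun y => by ring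
  rw [Finset.sum_congr rfl fun y _ => e1 y, Finset.sum_sub_distrib, Finset.sum_sub_distrib,
    hp1 x, ← Finset.sum_mul]
  ring

lemma condErr_def (p c : X → Fin n → ℝ) (hp1 : ∀ x, ∑ y : Fin n, p x y = 1)
    (pred : (Fin (n + 1) → ℝ) → Fin (n + 1)) (h : X → Fin (n + 1) → ℝ) (x : X) :
    condErr p (defLoss pred c) h x = 1 - qext p c x (pred (h x)) := by
  unfold condErr defLoss
  rcases Fin.eq_castSucc_or_eq_last (pred (h x)) with ⟨y₀, hy⟩ | hy
  · rw [hy]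
    have e1 : ∀ y : Fin n, p x y *
          ((if y₀.castSucc ≠ y.castSucc ∧ y₀.castSucc ≠ Fin.last n then (1:ℝ) else 0)
            + c x y * (if y₀.castSucc = Fin.last n then (1:ℝ) else 0))
        = p x y - (if y₀ = y then p x y else 0) := by
      intro y
      rw [if_neg (Fin.castSucc_lt_last y₀).ne, mul_zero, add_zero]
      by_cases hyy : y₀ = y
      · subst hyy; simp
      · rw [if_pos ⟨fun hc => hyy (Fin.castSucc_inj.mp hc), (Fin.castSucc_lt_last y₀).ne⟩,
          if_neg hyy]; ring
    rw [Finset.sum_congr rfl fun y _ => e1 y, Finset.sum_sub_distrib, hp1 x,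
      Finset.sum_ite_eq, if_pos (Finset.mem_univ y₀)]
    simp [qext]
  · rw [hy]
    have e1 : ∀ y : Fin n, p x y *
          ((if (Fin.last n : Fin (n+1)) ≠ y.castSucc ∧ (Fin.last n : Fin (n+1)) ≠ Fin.last n
              then (1:ℝ) else 0)
            + c x y * (if (Fin.last n : Fin (n+1)) = Fin.last n then (1:ℝ) else 0))
        = p x y * c x y := by intro y; simp
    rw [Finset.sum_congr rfl fun y _ => e1 y]
    simp only [qext, Fin.snoc_last]
    have e2 : ∀ y : Fin n, p x y * (1 - c x y) = p x y - p x y * c x y := fun y => by ring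
    rw [Finset.sum_congr rfl fun y _ => e2 y, Finset.sum_sub_distrib, hp1 x]
    ring

end CondErr

section Meas
variable {X : Type*} [MeasurableSpace X] {n : ℕ}

lemma measurable_smax_comp {h : X → Fin (n + 1) → ℝ} (hh : Measurable h) (k : Fin (n + 1)) :
    Measurable fun x => smax (h x) k := by
  unfold smax
  exact (Real.measurable_exp.comp ((measurable_pi_apply k).comp hh)).div
    (Finset.measurable_sum _ fun i _ =>
      Real.measurable_exp.comp ((measurable_pi_apply i).comp hh))

lemma measurable_qcomp {q : X → Fin (n + 1) → ℝ} (hq : ∀ k, Measurable fun x => q x k)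
    {f : X → Fin (n + 1)} (hf : Measurable f) : Measurable fun x => q x (f x) := by
  have e : (fun x => q x (f x))
      = fun x => ∑ k : Fin (n + 1), if f x = k then q x k else 0 := by
    funext x; rw [Finset.sum_ite_eq]; simp
  rw [e]
  exact Finset.measurable_sum _ fun k _ =>
    Measurable.ite (hf (measurableSet_singleton k)) (hq k) measurable_const

end Meas

/-- excess error bound over the family of all measurable hypotheses for
Ψ(t) = 1 − t and an arbitrary measurable cost `c : X×[n] → [0,1]` (Corollary 4.5):
for every measurable `h`,
`E_def(h) − E*_def(H_all) ≤ (n+1)·( E_Ψ(h) − E*_Ψ(H_all) )`. -/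
theorem excess_bound_Hall_mae {X : Type*} [MeasurableSpace X] (μ : Measure X)
    [IsProbabilityMeasure μ] (n : ℕ) (hn : 2 ≤ n)
    (p : X → Fin n → ℝ) (hpmeas : ∀ y, Measurable fun x => p x y)
    (hp0 : ∀ x y, 0 ≤ p x y) (hp1 : ∀ x, ∑ y : Fin n, p x y = 1)
    (c : X → Fin n → ℝ) (hcmeas : ∀ y, Measurable fun x => c x y)
    (hc : ∀ x y, c x y ∈ Set.Icc (0 : ℝ) 1)
    (pred : (Fin (n + 1) → ℝ) → Fin (n + 1))
    (hpred : ∀ (v : Fin (n + 1) → ℝ) (j : Fin (n + 1)), v j ≤ v (pred v))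
    (hpredmeas : Measurable pred)
    (h : X → Fin (n + 1) → ℝ) (hh : Measurable h) :
    genErr μ p (defLoss pred c) h
        - bestErr μ p (defLoss pred c) {h' : X → Fin (n + 1) → ℝ | Measurable h'} ≤
      ((n : ℝ) + 1) *
        (genErr μ p (surLoss (fun t => 1 - t) c) h
          - bestErr μ p (surLoss (fun t => 1 - t) c)
              {h' : X → Fin (n + 1) → ℝ | Measurable h'}) := by
  classical
  set q : X → Fin (n + 1) → ℝ := qext p c with hqdef
  have hqx : ∀ x, q x = Fin.snoc (p x) (∑ y : Fin n, p x y * (1 - c x y)) := fun x => rfl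
  have hq0 : ∀ x k, 0 ≤ q x k := by
    intro x k
    induction k using Fin.lastCases with
    | last =>
      rw [hqx, Fin.snoc_last]
      exact Finset.sum_nonneg fun y _ => mul_nonneg (hp0 x y) (by linarith [(hc x y).2])
    | cast y => rw [hqx, Fin.snoc_castSucc]; exact hp0 x y
  have hq1 : ∀ x k, q x k ≤ 1 := by
    intro x k
    induction k using Fin.lastCases with
    | last =>
      rw [hqx, Fin.snoc_last]
      calc ∑ y : Fin n, p x y * (1 - c x y) ≤ ∑ y : Fin n, p x y :=
            Finset.sum_le_sum fun y _ =>
              mul_le_of_le_one_right (hp0 x y) (by linarith [(hc x y).1])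
        _ = 1 := hp1 x
    | cast y =>
      rw [hqx, Fin.snoc_castSucc]
      calc p x y ≤ ∑ i : Fin n, p x i :=
            Finset.single_le_sum (fun i _ => hp0 x i) (Finset.mem_univ y)
        _ = 1 := hp1 x
  have hqmeas : ∀ k, Measurable fun x => q x k := by
    intro k
    induction k using Fin.lastCases with
    | last =>
      simp only [hqx, Fin.snoc_last]
      exact Finset.measurable_sum _ fun y _ =>
        (hpmeas y).mul (measurable_const.sub (hcmeas y))
    | cast y => simp only [hqx, Fin.snoc_castSucc]; exact hpmeas y
  set J : X → Fin (n + 1) := argmaxF q with hJdef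
  have hJmeas : Measurable J := measurable_argmaxF hqmeas
  set M : X → ℝ := fun x => q x (J x) with hMdef
  have hMx : ∀ x, M x = q x (J x) := fun _ => rfl
  have hMmeas : Measurable M := measurable_qcomp hqmeas hJmeas
  have hMspec : ∀ x k, q x k ≤ M x := fun x k => argmaxF_spec q x k
  have hM0 : ∀ x, 0 ≤ M x := fun x => hq0 x (J x)
  have hM1 : ∀ x, M x ≤ 1 := fun x => hq1 x (J x)
  have hqsum_le : ∀ (h' : X → Fin (n + 1) → ℝ) (x : X),
      ∑ k, q x k * smax (h' x) k ≤ M x := by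
    intro h' x
    calc ∑ k, q x k * smax (h' x) k
        ≤ ∑ k, M x * smax (h' x) k := Finset.sum_le_sum fun k _ =>
          mul_le_mul_of_nonneg_right (hMspec x k) (smax_pos _ k).le
      _ = M x := by rw [← Finset.mul_sum, sum_smax, mul_one]
  have hqsum_nonneg : ∀ (h' : X → Fin (n + 1) → ℝ) (x : X),
      0 ≤ ∑ k, q x k * smax (h' x) k :=
    fun h' x => Finset.sum_nonneg fun k _ => mul_nonneg (hq0 x k) (smax_pos _ k).le
  have int01 : ∀ {f : X → ℝ}, Measurable f → (∀ x, 0 ≤ f x) → (∀ x, f x ≤ 1) →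
      Integrable f μ := by
    intro f hf h0 h1
    exact (integrable_const (1 : ℝ)).mono' hf.aestronglyMeasurable
      (ae_of_all _ fun x => by
        rw [Real.norm_eq_abs, abs_of_nonneg (h0 x)]; exact h1 x)
  have intM : Integrable (fun x => 1 - M x) μ :=
    int01 (measurable_const.sub hMmeas) (fun x => by linarith [hM1 x])
      (fun x => by linarith [hM0 x])
  have esur : ∀ (h' : X → Fin (n + 1) → ℝ),
      (fun x => condErr p (surLoss (fun t => 1 - t) c) h' x)
        = fun x => 1 - ∑ k, q x k * smax (h' x) k :=
    fun h' => funext fun x => condErr_sur p c hp1 h' x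
  have int_sur : ∀ (h' : X → Fin (n + 1) → ℝ), Measurable h' →
      Integrable (fun x => condErr p (surLoss (fun t => 1 - t) c) h' x) μ := by
    intro h' hh'
    rw [esur h']
    refine int01 (measurable_const.sub (Finset.measurable_sum _ fun k _ =>
        (hqmeas k).mul (measurable_smax_comp hh' k))) ?_ ?_
    · intro x; have := hqsum_le h' x; have := hM1 x; linarith
    · intro x; have := hqsum_nonneg h' x; linarith
  have int_def : ∀ (h' : X → Fin (n + 1) → ℝ), Measurable h' →
      Integrable (fun x => condErr p (defLoss pred c) h' x) μ := by
    intro h' hh'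
    have e : (fun x => condErr p (defLoss pred c) h' x)
        = fun x => 1 - q x (pred (h' x)) :=
      funext fun x => condErr_def p c hp1 pred h' x
    rw [e]
    exact int01 (measurable_const.sub (measurable_qcomp hqmeas (hpredmeas.comp hh')))
      (fun x => by linarith [hq1 x (pred (h' x))])
      (fun x => by linarith [hq0 x (pred (h' x))])
  -- Step A
  have stepA : ∫ x, (1 - M x) ∂μ
      ≤ bestErr μ p (defLoss pred c) {h' : X → Fin (n + 1) → ℝ | Measurable h'} := by
    refine le_csInf ⟨genErr μ p (defLoss pred c) h, ⟨h, hh, rfl⟩⟩ ?_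
    rintro b ⟨h', hh', rfl⟩
    refine integral_mono intM (int_def h' hh') fun x => ?_
    rw [condErr_def p c hp1 pred h' x]; simp only [← hqdef]
    have := hMspec x (pred (h' x)); linarith
  -- Step B
  have stepB : bestErr μ p (surLoss (fun t => 1 - t) c)
      {h' : X → Fin (n + 1) → ℝ | Measurable h'} ≤ ∫ x, (1 - M x) ∂μ := by
    have hbdd : BddBelow ((genErr μ p (surLoss (fun t => 1 - t) c)) ''
        {h' : X → Fin (n + 1) → ℝ | Measurable h'}) := by
      refine ⟨0, ?_⟩
      rintro b ⟨h', hh', rfl⟩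
      refine integral_nonneg fun x => ?_
      rw [condErr_sur p c hp1 h' x]; simp only [← hqdef, Pi.zero_apply]
      have := hqsum_le h' x; have := hM1 x; linarith
    refine le_of_forall_pos_le_add fun ε hε => ?_
    have hNpos : (0 : ℝ) < n := by
      have : (2 : ℝ) ≤ n := by exact_mod_cast hn
      linarith
    set T : ℝ := Real.log ((n : ℝ) / ε) with hTdef
    set g : X → Fin (n + 1) → ℝ := fun x k => if J x = k then T else 0 with hgdef
    have hgmeas : Measurable g :=
      measurable_pi_lambda _ fun k =>
        Measurable.ite (hJmeas (measurableSet_singleton k)) measurable_const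
          measurable_const
    have hexpT : Real.exp T = (n : ℝ) / ε := Real.exp_log (by positivity)
    have hexpTpos : (0 : ℝ) < Real.exp T + n := by positivity
    have hsmaxg : ∀ x, smax (g x) (J x) = Real.exp T / (Real.exp T + n) := by
      intro x
      unfold smax
      have hnum : g x (J x) = T := by simp [hgdef]
      have hden : ∑ k : Fin (n + 1), Real.exp (g x k) = Real.exp T + n := by
        have e1 : ∀ k : Fin (n + 1), Real.exp (g x k)
            = (if J x = k then Real.exp T - 1 else 0) + 1 := by
          intro k
          simp only [hgdef]
          split <;> simp
        rw [Finset.sum_congr rfl fun k _ => e1 k, Finset.sum_add_distrib,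
          Finset.sum_ite_eq, if_pos (Finset.mem_univ (J x))]
        simp [Finset.card_univ]
      rw [hnum, hden]
    have hδ : (1 : ℝ) - Real.exp T / (Real.exp T + n) ≤ ε := by
      rw [hexpT]
      have hd : (0 : ℝ) < (n : ℝ)/ε + (n : ℝ) := by positivity
      have e : (1 : ℝ) - ((n : ℝ)/ε)/(((n : ℝ)/ε) + n) = (n : ℝ)/(((n : ℝ)/ε) + n) := by
        field_simp; ring
      rw [e, div_le_iff₀ hd]
      have e2 : ε * ((n : ℝ)/ε + n) = (n : ℝ) + ε * n := by field_simp
      nlinarith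
    have hr0 : 0 ≤ Real.exp T / (Real.exp T + n) :=
      div_nonneg (Real.exp_pos _).le hexpTpos.le
    have hr1 : Real.exp T / (Real.exp T + n) ≤ 1 := by
      rw [div_le_one hexpTpos]; linarith
    have hpw : ∀ x, condErr p (surLoss (fun t => 1 - t) c) g x ≤ (1 - M x) + ε := by
      intro x
      rw [condErr_sur p c hp1 g x]; simp only [← hqdef]
      have hlow : M x * (Real.exp T / (Real.exp T + n)) ≤ ∑ k, q x k * smax (g x) k := by
        have h1 : q x (J x) * smax (g x) (J x) ≤ ∑ k, q x k * smax (g x) k :=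
          Finset.single_le_sum (fun k _ => mul_nonneg (hq0 x k) (smax_pos _ k).le)
            (Finset.mem_univ (J x))
        rw [hsmaxg x, ← hMx x] at h1
        exact h1
      have hM1x := hM1 x
      have hM0x := hM0 x
      nlinarith [hδ, hr0, hr1]
    have hmem : genErr μ p (surLoss (fun t => 1 - t) c) g
        ∈ (genErr μ p (surLoss (fun t => 1 - t) c)) ''
            {h' : X → Fin (n + 1) → ℝ | Measurable h'} := ⟨g, hgmeas, rfl⟩
    refine le_trans (csInf_le hbdd hmem) ?_
    have : genErr μ p (surLoss (fun t => 1 - t) c) g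
        ≤ ∫ x, ((1 - M x) + ε) ∂μ :=
      integral_mono (int_sur g hgmeas) (intM.add (integrable_const ε)) hpw
    rwa [integral_add intM (integrable_const ε), integral_const, probReal_univ,
      one_smul] at this
  -- Step C/D
  have hpwmain : ∀ x, condErr p (defLoss pred c) h x - (1 - M x)
      ≤ ((n : ℝ) + 1) * (condErr p (surLoss (fun t => 1 - t) c) h x - (1 - M x)) := by
    intro x
    rw [condErr_def p c hp1 pred h x, condErr_sur p c hp1 h x]
    simp only [← hqdef]
    rw [hMx x]
    have core := core_ineq (q x) (hq0 x) (J x) (pred (h x))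
      (fun k => hMspec x k) (h x) (fun k => hpred (h x) k)
    linarith
  have i1 : Integrable (fun x => condErr p (defLoss pred c) h x - (1 - M x)) μ :=
    (int_def h hh).sub intM
  have i2 : Integrable
      (fun x => ((n : ℝ) + 1) * (condErr p (surLoss (fun t => 1 - t) c) h x - (1 - M x))) μ :=
    ((int_sur h hh).sub intM).const_mul _
  have stepD := integral_mono i1 i2 hpwmain
  rw [integral_sub (int_def h hh) intM, integral_const_mul,
    integral_sub (int_sur h hh) intM] at stepD
  have hglb : (0 : ℝ) ≤ (n : ℝ) + 1 := by positivity
  have hfin := mul_le_mul_of_nonneg_left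
    (sub_le_sub_left stepB (genErr μ p (surLoss (fun t => 1 - t) c) h)) hglb
  have edef : genErr μ p (defLoss pred c) h
      = ∫ x, condErr p (defLoss pred c) h x ∂μ := rfl
  have esur2 : genErr μ p (surLoss (fun t => 1 - t) c) h
      = ∫ x, condErr p (surLoss (fun t => 1 - t) c) h x ∂μ := rfl
  rw [edef, esur2]
  linarith [stepA, stepD, hfin]
end

section
/- Case-II conditional lower bound for Ψ(t) = 1 − t (from the proof of Theorem 4.3): let Ψ(t) = 1 − t and let i ∈ [n] satisfy p_i = max_{y∈[n]} p_y and h_i = max_{y∈[n]} h_y. Then ΔC_Ψ(h) ≥ (p_{n+1} − p_i)·s_i(h), where s_i(h) = exp(h_i)/Σ_{y'∈Ȳ} exp(h_{y'}). -/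
open Real

/-- Conditional RL2D error `C_Ψ(h) = Σ_y [ q_y Ψ(s_y) + (p_y − q_y) Ψ(s_y + s_{n+1}) ]`
with `q_y = p_y c_y`; label `Fin.last n` is the deferral label. -/
noncomputable def condC {n : ℕ} (Ψ : ℝ → ℝ) (p c : Fin n → ℝ) (v : Fin (n + 1) → ℝ) : ℝ :=
  ∑ y : Fin n, (p y * c y * Ψ (smax v y.castSucc)
    + (p y - p y * c y) * Ψ (smax v y.castSucc + smax v (Fin.last n)))

/-- Conditional regret `ΔC_Ψ(h) = C_Ψ(h) − inf_{h'} C_Ψ(h')`. -/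
noncomputable def condRegret {n : ℕ} (Ψ : ℝ → ℝ) (p c : Fin n → ℝ)
    (v : Fin (n + 1) → ℝ) : ℝ :=
  condC Ψ p c v - ⨅ v' : Fin (n + 1) → ℝ, condC Ψ p c v'

/-- `P(k)`: `p_k` for `k ∈ [n]` and `p_{n+1} = Σ_y p_y (1 − c_y)` for the deferral label. -/
noncomputable def Pfull {n : ℕ} (p c : Fin n → ℝ) (k : Fin (n + 1)) : ℝ :=
  if h : k = Fin.last n then ∑ y : Fin n, p y * (1 - c y) else p (k.castPred h)

/-- Conditional deferral regret `ΔC_def = max{max_y p_y, p_{n+1}} − P(k)`. -/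
noncomputable def defRegret {n : ℕ} (p c : Fin n → ℝ) (k : Fin (n + 1)) : ℝ :=
  max (⨆ y : Fin n, p y) (∑ y : Fin n, p y * (1 - c y)) - Pfull p c k

lemma smax_nonneg {m : ℕ} (v : Fin m → ℝ) (y : Fin m) : 0 ≤ smax v y := by
  unfold smax; positivity

lemma smax_sum {n : ℕ} (v : Fin (n + 1) → ℝ) : ∑ k : Fin (n + 1), smax v k = 1 := by
  unfold smax
  rw [← Finset.sum_div, div_self]
  exact ne_of_gt (Finset.sum_pos (fun k _ => Real.exp_pos _) Finset.univ_nonempty)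

lemma condC_one_sub {n : ℕ} (p c : Fin n → ℝ) (hp1 : ∑ y : Fin n, p y = 1)
    (v : Fin (n + 1) → ℝ) :
    condC (fun t => 1 - t) p c v
      = 1 - (∑ y : Fin n, p y * smax v y.castSucc)
          - (∑ y : Fin n, p y * (1 - c y)) * smax v (Fin.last n) := by
  have h1 : condC (fun t => 1 - t) p c v
      = ∑ y : Fin n, (p y - p y * smax v y.castSucc
          - (p y * (1 - c y)) * smax v (Fin.last n)) := by
    unfold condC; exact Finset.sum_congr rfl (fun y _ => by ring)
  rw [h1, Finset.sum_sub_distrib, Finset.sum_sub_distrib, hp1, ← Finset.sum_mul]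

lemma condC_ge {n : ℕ} (p c : Fin n → ℝ) (hp1 : ∑ y : Fin n, p y = 1)
    (i : Fin n) (hpi : ∀ y : Fin n, p y ≤ p i)
    (hP : (∑ y : Fin n, p y * (1 - c y)) ≤ max (p i) (∑ y : Fin n, p y * (1 - c y)))
    (v : Fin (n + 1) → ℝ) :
    1 - max (p i) (∑ y : Fin n, p y * (1 - c y)) ≤ condC (fun t => 1 - t) p c v := by
  set M := max (p i) (∑ y : Fin n, p y * (1 - c y)) with hM
  rw [condC_one_sub p c hp1 v]
  have hsum : (∑ y : Fin n, smax v y.castSucc) + smax v (Fin.last n) = 1 := by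
    rw [← Fin.sum_univ_castSucc]; exact smax_sum v
  have h1 : ∑ y : Fin n, p y * smax v y.castSucc ≤ ∑ y : Fin n, M * smax v y.castSucc :=
    Finset.sum_le_sum fun y _ =>
      mul_le_mul_of_nonneg_right ((hpi y).trans (le_max_left _ _)) (smax_nonneg v _)
  have h2 : (∑ y : Fin n, M * smax v y.castSucc) = M * ∑ y : Fin n, smax v y.castSucc :=
    (Finset.mul_sum _ _ _).symm
  have h3 : (∑ y : Fin n, p y * (1 - c y)) * smax v (Fin.last n) ≤ M * smax v (Fin.last n) :=
    mul_le_mul_of_nonneg_right hP (smax_nonneg v _)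
  have h4 : M * (∑ y : Fin n, smax v y.castSucc) + M * smax v (Fin.last n) = M := by
    rw [← mul_add, hsum, mul_one]
  linarith

/-- Case-II conditional lower bound for Ψ(t) = 1 − t (from the proof of
Theorem 4.3): if i ∈ [n] satisfies p_i = max_{y∈[n]} p_y and h_i = max_{y∈[n]} h_y,
then ΔC_Ψ(h) ≥ (p_{n+1} − p_i)·s_i(h). -/
theorem caseII_bound_one_sub {n : ℕ} (hn : 2 ≤ n) (p c : Fin n → ℝ)
    (hp0 : ∀ y, 0 ≤ p y) (hp1 : ∑ y : Fin n, p y = 1)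
    (hc : ∀ y, c y ∈ Set.Icc (0 : ℝ) 1)
    (v : Fin (n + 1) → ℝ) (i : Fin n)
    (hpi : ∀ y : Fin n, p y ≤ p i)
    (hvi : ∀ y : Fin n, v y.castSucc ≤ v i.castSucc) :
    condRegret (fun t => 1 - t) p c v ≥
      ((∑ y : Fin n, p y * (1 - c y)) - p i) * smax v i.castSucc := by
  set P := ∑ y : Fin n, p y * (1 - c y) with hPdef
  set M := max (p i) P with hM
  have hPle : P ≤ M := le_max_right _ _
  have hpile : p i ≤ M := le_max_left _ _
  -- basic bounds
  have hP0 : 0 ≤ P := Finset.sum_nonneg fun y _ =>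
    mul_nonneg (hp0 y) (by linarith [(hc y).2])
  have hP1 : P ≤ 1 := by
    rw [← hp1]
    exact Finset.sum_le_sum fun y _ => by nlinarith [(hc y).1, hp0 y]
  have hpi1 : p i ≤ 1 := by
    rw [← hp1]
    exact Finset.single_le_sum (fun y _ => hp0 y) (Finset.mem_univ i)
  have hM1 : M ≤ 1 := max_le hpi1 hP1
  have hM0 : 0 ≤ M := le_trans hP0 hPle
  -- the infimum is at most 1 - M
  have hbdd : BddBelow (Set.range fun v' => condC (fun t => 1 - t) p c v') := by
    refine ⟨1 - M, ?_⟩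
    rintro x ⟨v', rfl⟩
    exact condC_ge p c hp1 i hpi hPle v'
  have hinf : (⨅ v' : Fin (n + 1) → ℝ, condC (fun t => 1 - t) p c v') ≤ 1 - M := by
    refine le_of_forall_pos_le_add fun ε hε => ?_
    -- choose the label with weight M
    obtain ⟨j, hj⟩ : ∃ j : Fin (n + 1),
        ∀ w : Fin (n + 1) → ℝ, M * smax w j ≤
          (∑ y : Fin n, p y * smax w y.castSucc) + P * smax w (Fin.last n) := by
      rcases le_total P (p i) with h | h
      · refine ⟨i.castSucc, fun w => ?_⟩
        have h1 : p i * smax w i.castSucc ≤ ∑ y : Fin n, p y * smax w y.castSucc :=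
          Finset.single_le_sum (fun y _ => mul_nonneg (hp0 y) (smax_nonneg w _))
            (Finset.mem_univ i)
        have h2 : 0 ≤ P * smax w (Fin.last n) := mul_nonneg hP0 (smax_nonneg w _)
        have : M = p i := max_eq_left h
        rw [this]; linarith
      · refine ⟨Fin.last n, fun w => ?_⟩
        have h1 : 0 ≤ ∑ y : Fin n, p y * smax w y.castSucc :=
          Finset.sum_nonneg fun y _ => mul_nonneg (hp0 y) (smax_nonneg w _)
        have : M = P := max_eq_right h
        rw [this]; linarith
    set t : ℝ := Real.log (n / ε) with ht
    set w : Fin (n + 1) → ℝ := fun k => if k = j then t else 0 with hw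
    have hn0 : (0 : ℝ) < n := by positivity
    have het : Real.exp t = n / ε := Real.exp_log (by positivity)
    have hden : ∑ k : Fin (n + 1), Real.exp (w k) = Real.exp t + n := by
      have : ∀ k : Fin (n + 1), Real.exp (w k) = 1 + (if k = j then Real.exp t - 1 else 0) := by
        intro k; by_cases hk : k = j <;> simp [hw, hk]
      rw [Finset.sum_congr rfl fun k _ => this k, Finset.sum_add_distrib,
        Finset.sum_ite_eq' Finset.univ j fun _ => Real.exp t - 1]
      simp [Finset.card_univ]
      ring
    have hsj : smax w j = Real.exp t / (Real.exp t + n) := by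
      unfold smax
      rw [hden]
      simp [hw]
    have hsj1 : 1 - smax w j ≤ ε := by
      rw [hsj]
      have hpos : (0 : ℝ) < Real.exp t + n := by positivity
      have : 1 - Real.exp t / (Real.exp t + n) = n / (Real.exp t + n) := by
        field_simp
        ring
      rw [this]
      have h1 : (n : ℝ) / (Real.exp t + n) ≤ n / Real.exp t :=
        div_le_div_of_nonneg_left (le_of_lt hn0) (Real.exp_pos t) (by linarith)
      have h2 : (n : ℝ) / Real.exp t = ε := by
        rw [het]; field_simp
      linarith
    have hsjle : smax w j ≤ 1 := by
      rw [hsj]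
      rw [div_le_one (by positivity)]
      linarith
    have hCw : condC (fun t => 1 - t) p c w ≤ 1 - M + ε := by
      rw [condC_one_sub p c hp1 w]
      have := hj w
      nlinarith [smax_nonneg w j]
    exact le_trans (ciInf_le hbdd w) hCw
  -- finish
  unfold condRegret
  rw [condC_one_sub p c hp1 v]
  have hsum : (∑ y : Fin n, smax v y.castSucc) + smax v (Fin.last n) = 1 := by
    rw [← Fin.sum_univ_castSucc]; exact smax_sum v
  have h1 : ∑ y : Fin n, p y * smax v y.castSucc
      ≤ p i * ∑ y : Fin n, smax v y.castSucc := by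
    rw [Finset.mul_sum]
    exact Finset.sum_le_sum fun y _ => mul_le_mul_of_nonneg_right (hpi y) (smax_nonneg v _)
  have hsi : smax v i.castSucc ≤ ∑ y : Fin n, smax v y.castSucc :=
    Finset.single_le_sum (fun y _ => smax_nonneg v _) (Finset.mem_univ i)
  have hsi0 : 0 ≤ smax v i.castSucc := smax_nonneg v _
  have hsl0 : 0 ≤ smax v (Fin.last n) := smax_nonneg v _
  rcases le_total P (p i) with h | h
  · have hMeq : M = p i := max_eq_left h
    have : (P - p i) * smax v i.castSucc ≤ 0 :=
      mul_nonpos_of_nonpos_of_nonneg (by linarith) hsi0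
    nlinarith
  · have hMeq : M = P := max_eq_right h
    have key : (P - p i) * smax v i.castSucc
        ≤ (P - p i) * (1 - smax v (Fin.last n)) := by
      apply mul_le_mul_of_nonneg_left _ (by linarith)
      linarith
    nlinarith
end
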